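/- Suppose α ↘ β, meaning there exist indices k < l with β_k = α_k − 1, β_l = α_l + 1, and β_i = α_i otherwise (with α_k − 1 ≥ α_l + 1 so β is still weakly decreasing). Then [α] − [β] = (1/2)·R((x_k − x_l)² · (Σ_{j=α_l}^{α_k−2} x_k^j x_l^{α_k+α_l−2−j}) · Π_{i≠k,l} x_i^{α_i}), where R is the symmetrization operator Rf = (1/n!) Σ_{σ∈Sₙ} f(x_{σ(1)},…,x_{σ(n)}). -/
import Mathlib


open Finset MvPolynomial

/-- The Reynolds (symmetrization) operator of the symmetric group `Sₙ`. -/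
noncomputable def reynolds (n : ℕ) (f : MvPolynomial (Fin n) ℝ) : MvPolynomial (Fin n) ℝ :=
  ((n.factorial : ℝ))⁻¹ • ∑ σ : Equiv.Perm (Fin n), rename σ f

/-- The normalized monomial symmetric polynomial `[α]`. -/
noncomputable def msym (n : ℕ) (α : Fin n → ℕ) : MvPolynomial (Fin n) ℝ :=
  reynolds n (∏ j, X j ^ α j)

lemma reynolds_rename (n : ℕ) (σ : Equiv.Perm (Fin n)) (f : MvPolynomial (Fin n) ℝ) :
    reynolds n (rename σ f) = reynolds n f := by
  unfold reynolds
  congr 1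
  have : ∀ τ : Equiv.Perm (Fin n), rename (⇑τ) (rename (⇑σ) f) = rename (⇑(τ * σ)) f := by
    intro τ
    rw [rename_rename]
    rfl
  simp_rw [this]
  exact Equiv.sum_comp (Equiv.mulRight σ) (fun τ : Equiv.Perm (Fin n) => rename (⇑τ) f)

lemma reynolds_add (n : ℕ) (f g : MvPolynomial (Fin n) ℝ) :
    reynolds n (f + g) = reynolds n f + reynolds n g := by
  unfold reynolds
  simp [Finset.sum_add_distrib, smul_add]

lemma reynolds_sub (n : ℕ) (f g : MvPolynomial (Fin n) ℝ) :
    reynolds n (f - g) = reynolds n f - reynolds n g := by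
  unfold reynolds
  simp [Finset.sum_sub_distrib, smul_sub]

lemma geom_tel {R : Type*} [CommRing R] (x y : R) (d e : ℕ) :
    (x - y) * ∑ j ∈ Finset.Icc d (d + e), x ^ j * y ^ ((d + e - j) + d) =
      x ^ (d + e + 1) * y ^ d - x ^ d * y ^ (d + e + 1) := by
  induction e with
  | zero => simp [pow_succ]; ring
  | succ e ih =>
    rw [show d + (e + 1) = (d + e) + 1 by ring,
      Finset.sum_Icc_succ_top (by omega : d ≤ d + e + 1)]
    have hcongr : ∑ j ∈ Finset.Icc d (d + e), x ^ j * y ^ ((d + e + 1 - j) + d) =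
        y * ∑ j ∈ Finset.Icc d (d + e), x ^ j * y ^ ((d + e - j) + d) := by
      rw [Finset.mul_sum]
      refine Finset.sum_congr rfl fun j hj => ?_
      simp only [Finset.mem_Icc] at hj
      rw [show (d + e + 1 - j) + d = ((d + e - j) + d) + 1 by omega, pow_succ]
      ring
    rw [hcongr]
    have : (x - y) * (y * ∑ j ∈ Finset.Icc d (d + e), x ^ j * y ^ ((d + e - j) + d) +
        x ^ (d + e + 1) * y ^ ((d + e + 1 - (d + e + 1)) + d)) =
        y * ((x - y) * ∑ j ∈ Finset.Icc d (d + e), x ^ j * y ^ ((d + e - j) + d)) +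
        (x - y) * (x ^ (d + e + 1) * y ^ d) := by
      simp only [Nat.sub_self, zero_add]
      ring
    rw [this, ih]
    simp only [pow_succ]
    ring

theorem single_step_identity (n : ℕ) (α β : Fin n → ℕ)
    (hα : ∀ i j : Fin n, i ≤ j → α j ≤ α i) (hβ : ∀ i j : Fin n, i ≤ j → β j ≤ β i)
    (k l : Fin n) (hkl : k < l)
    (hk : α k = β k + 1) (hl : β l = α l + 1)
    (hother : ∀ i : Fin n, i ≠ k → i ≠ l → β i = α i)
    (hstep : α l + 2 ≤ α k) :
    msym n α - msym n β =
      (2 : ℝ)⁻¹ • reynolds n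
        ((X k - X l) ^ 2 *
          (∑ j ∈ Finset.Icc (α l) (α k - 2),
            X k ^ j * X l ^ (α k + α l - 2 - j)) *
          ∏ i ∈ univ.filter (fun i : Fin n => i ≠ k ∧ i ≠ l), X i ^ α i) := by
  have hkl' : k ≠ l := ne_of_lt hkl
  set m : MvPolynomial (Fin n) ℝ :=
    ∏ i ∈ univ.filter (fun i : Fin n => i ≠ k ∧ i ≠ l), X i ^ α i with hm
  -- abbreviations
  obtain ⟨c, hc⟩ : ∃ c, α k = c + 1 := ⟨β k, hk⟩
  set d := α l with hd
  have hdc : d + 1 ≤ c := by omega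
  obtain ⟨e, he⟩ : ∃ e, c = d + e + 1 := ⟨c - d - 1, by omega⟩
  -- product decompositions
  have hprod : ∀ γ : Fin n → ℕ, (∏ j, X j ^ γ j : MvPolynomial (Fin n) ℝ) =
      X k ^ γ k * X l ^ γ l * ∏ i ∈ univ.filter (fun i : Fin n => i ≠ k ∧ i ≠ l), X i ^ γ i := by
    intro γ
    rw [← Finset.prod_filter_mul_prod_filter_not univ (fun i => i ≠ k ∧ i ≠ l), mul_comm]
    congr 1
    have : univ.filter (fun i : Fin n => ¬(i ≠ k ∧ i ≠ l)) = {k, l} := by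
      ext i
      simp only [Finset.mem_filter, Finset.mem_univ, true_and, Finset.mem_insert,
        Finset.mem_singleton]
      tauto
    rw [this, Finset.prod_pair hkl']
  have hmβ : (∏ i ∈ univ.filter (fun i : Fin n => i ≠ k ∧ i ≠ l), X i ^ β i :
      MvPolynomial (Fin n) ℝ) = m := by
    refine Finset.prod_congr rfl fun i hi => ?_
    simp only [Finset.mem_filter, Finset.mem_univ, true_and] at hi
    rw [hother i hi.1 hi.2]
  have hA : msym n α = reynolds n (X k ^ (c + 1) * X l ^ d * m) := by
    rw [msym, hprod α, hc]
  have hB : msym n β = reynolds n (X k ^ c * X l ^ (d + 1) * m) := by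
    rw [msym, hprod β, hmβ, show β k = c by omega, show β l = d + 1 by omega]
  -- telescoping identity
  have hsum : (∑ j ∈ Finset.Icc (α l) (α k - 2),
      (X k : MvPolynomial (Fin n) ℝ) ^ j * X l ^ (α k + α l - 2 - j)) =
      ∑ j ∈ Finset.Icc d (d + e), X k ^ j * X l ^ ((d + e - j) + d) := by
    rw [show α k - 2 = d + e by omega]
    refine Finset.sum_congr rfl fun j hj => ?_
    simp only [Finset.mem_Icc] at hj
    rw [show α k + α l - 2 - j = (d + e - j) + d by omega]
  have hsq : ((X k - X l : MvPolynomial (Fin n) ℝ)) ^ 2 *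
      (∑ j ∈ Finset.Icc (α l) (α k - 2),
        (X k : MvPolynomial (Fin n) ℝ) ^ j * X l ^ (α k + α l - 2 - j)) =
      X k ^ (c + 1) * X l ^ d + X k ^ d * X l ^ (c + 1)
        - X k ^ c * X l ^ (d + 1) - X k ^ (d + 1) * X l ^ c := by
    rw [hsum, sq, mul_assoc, geom_tel, he]
    simp only [pow_succ]
    ring
  -- swap symmetry
  have hmren : rename (⇑(Equiv.swap k l)) m = m := by
    rw [hm, map_prod]
    refine Finset.prod_congr rfl fun i hi => ?_
    simp only [Finset.mem_filter, Finset.mem_univ, true_and] at hi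
    rw [map_pow, rename_X, Equiv.swap_apply_of_ne_of_ne hi.1 hi.2]
  have hswap : ∀ p q : ℕ, reynolds n ((X k : MvPolynomial (Fin n) ℝ) ^ q * X l ^ p * m) =
      reynolds n (X k ^ p * X l ^ q * m) := by
    intro p q
    rw [← reynolds_rename n (Equiv.swap k l) (X k ^ p * X l ^ q * m)]
    congr 1
    rw [map_mul, map_mul, map_pow, map_pow, rename_X, rename_X,
      Equiv.swap_apply_left, Equiv.swap_apply_right, hmren]
    ring
  -- assemble
  rw [hA, hB]
  have hrhs : ((X k - X l : MvPolynomial (Fin n) ℝ)) ^ 2 *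
      (∑ j ∈ Finset.Icc (α l) (α k - 2),
        (X k : MvPolynomial (Fin n) ℝ) ^ j * X l ^ (α k + α l - 2 - j)) * m =
      (X k ^ (c + 1) * X l ^ d * m + X k ^ d * X l ^ (c + 1) * m)
        - (X k ^ c * X l ^ (d + 1) * m + X k ^ (d + 1) * X l ^ c * m) := by
    rw [hsq]; ring
  rw [hrhs, reynolds_sub, reynolds_add, reynolds_add, hswap (c + 1) d, hswap c (d + 1)]
  have key : ∀ u v : MvPolynomial (Fin n) ℝ, u - v = (2 : ℝ)⁻¹ • (u + u - (v + v)) := by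
    intro u v
    rw [show u + u - (v + v) = (2 : ℝ) • (u - v) by rw [smul_sub, two_smul, two_smul]]
    rw [smul_smul]
    norm_num
  exact key _ _
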